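/- In the graph G_n, every nonzero real eigenvalue λ of the graph Laplacian Δ (i.e. every λ ≠ 0 for which there exists a function f on the vertices of G_n, not identically zero, with Δf = λ·f) satisfies λ ≥ 2/(n+2)². -/

import Mathlib

open Finset Filter Topology

noncomputable section

/-- A coupling between two (probability) mass functions `μ` and `ν` on a finite
vertex set: a matrix with values in `[0,1]` whose row sums are `μ` and whose
column sums are `ν`. -/
def IsCoupling {V : Type*} [Fintype V] (A : V → V → ℝ) (μ ν : V → ℝ) : Prop :=
  (∀ x y, 0 ≤ A x y ∧ A x y ≤ 1) ∧
  (∀ x, ∑ y, A x y = μ x) ∧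
  (∀ y, ∑ x, A x y = ν y)

/-- The (1-)Wasserstein distance between two mass functions on the vertex set of a
graph, with respect to the graph distance. -/
def Wass {V : Type*} [Fintype V] (G : SimpleGraph V) (μ ν : V → ℝ) : ℝ :=
  sInf {c | ∃ A : V → V → ℝ, IsCoupling A μ ν ∧
    c = ∑ x, ∑ y, A x y * (G.dist x y : ℝ)}

/-- The probability measure `m_x^α`: mass `α` at `x`, mass `(1-α)/d_x` at each
neighbor of `x`, and `0` elsewhere. -/
def mMeas {V : Type*} [Fintype V] [DecidableEq V] (G : SimpleGraph V)
    [DecidableRel G.Adj] (α : ℝ) (x : V) : V → ℝ :=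
  fun z => if z = x then α else if G.Adj x z then (1 - α) / (G.degree x : ℝ) else 0

/-- The `α`-Ricci curvature `κ_α(x,y) = 1 - W(m_x^α, m_y^α)/d(x,y)`. -/
def kappaAlpha {V : Type*} [Fintype V] [DecidableEq V] (G : SimpleGraph V)
    [DecidableRel G.Adj] (α : ℝ) (x y : V) : ℝ :=
  1 - Wass G (mMeas G α x) (mMeas G α y) / (G.dist x y : ℝ)

/-- The Lin–Lu–Yau Ricci curvature `κ(x,y) = lim_{α→1⁻} κ_α(x,y)/(1-α)`. -/
def kappa {V : Type*} [Fintype V] [DecidableEq V] (G : SimpleGraph V)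
    [DecidableRel G.Adj] (x y : V) : ℝ :=
  limUnder (𝓝[<] (1 : ℝ)) (fun α => kappaAlpha G α x y / (1 - α))

/-- The (non-normalized) graph Laplacian `(Δf)(x) = d_x f(x) - ∑_{y ~ x} f(y)`. -/
def lap {V : Type*} [Fintype V] [DecidableEq V] (G : SimpleGraph V)
    [DecidableRel G.Adj] (f : V → ℝ) (x : V) : ℝ :=
  (G.degree x : ℝ) * f x - ∑ y ∈ G.neighborFinset x, f y

end

/-- The corresponding graph of the boundary of the `(n+1)`-simplex: vertices are
the nonempty subsets of `{0,…,n+1}` of cardinality at most `n+1`, adjacent when one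
is contained in the other with cardinalities differing by exactly `1`. -/
def simplexGraph (n : ℕ) :
    SimpleGraph {s : Finset (Fin (n + 2)) // s.Nonempty ∧ s.card ≤ n + 1} where
  Adj s t := (s.1 ⊆ t.1 ∧ t.1.card = s.1.card + 1) ∨ (t.1 ⊆ s.1 ∧ s.1.card = t.1.card + 1)
  symm := ⟨by intro s t h; tauto⟩
  loopless := ⟨by intro s h; rcases h with ⟨_, h⟩ | ⟨_, h⟩ <;> omega⟩

instance (n : ℕ) : DecidableRel (simplexGraph n).Adj := fun s t =>
  inferInstanceAs (Decidable
    ((s.1 ⊆ t.1 ∧ t.1.card = s.1.card + 1) ∨ (t.1 ⊆ s.1 ∧ s.1.card = t.1.card + 1)))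

set_option linter.unusedSectionVars false

-- ==== general graph lemmas ====
section graph
variable {V : Type*} [Fintype V] [DecidableEq V] (G : SimpleGraph V) [DecidableRel G.Adj]

lemma nbr_swap (φ : V → ℝ) :
    ∑ x, ∑ y ∈ G.neighborFinset x, φ y = ∑ y, (G.degree y : ℝ) * φ y := by
  have h1 : ∀ x : V, ∑ y ∈ G.neighborFinset x, φ y = ∑ y, if G.Adj x y then φ y else 0 := by
    intro x
    rw [SimpleGraph.neighborFinset_eq_filter, Finset.sum_filter]
  rw [Finset.sum_congr rfl (fun x _ => h1 x), Finset.sum_comm]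
  refine Finset.sum_congr rfl (fun y _ => ?_)
  have h2 : ∀ x : V, (if G.Adj x y then φ y else 0) = (if G.Adj y x then φ y else 0) := by
    intro x; simp [SimpleGraph.adj_comm]
  rw [Finset.sum_congr rfl (fun x _ => h2 x), ← Finset.sum_filter, Finset.sum_const]
  have h3 : #(filter (G.Adj y) univ) = G.degree y := by
    rw [← SimpleGraph.neighborFinset_eq_filter, SimpleGraph.card_neighborFinset_eq_degree]
  rw [h3, nsmul_eq_mul]

lemma sum_lap (f : V → ℝ) : ∑ x, lap G f x = 0 := by
  unfold lap
  rw [Finset.sum_sub_distrib, nbr_swap G f, sub_self]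

lemma dirichlet (f : V → ℝ) :
    ∑ x, ∑ y ∈ G.neighborFinset x, (f x - f y)^2 = 2 * ∑ x, f x * lap G f x := by
  have expand : ∀ x : V, ∑ y ∈ G.neighborFinset x, (f x - f y)^2
      = ((G.degree x : ℝ) * f x ^ 2 - 2 * f x * (∑ y ∈ G.neighborFinset x, f y))
        + ∑ y ∈ G.neighborFinset x, f y ^ 2 := by
    intro x
    have h : ∀ y ∈ G.neighborFinset x, (f x - f y)^2
        = (f x ^ 2 - 2 * f x * f y) + f y ^ 2 := by
      intro y _; ring
    rw [Finset.sum_congr rfl h, Finset.sum_add_distrib, Finset.sum_sub_distrib,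
      Finset.sum_const, ← Finset.mul_sum, SimpleGraph.card_neighborFinset_eq_degree,
      nsmul_eq_mul]
  rw [Finset.sum_congr rfl (fun x _ => expand x), Finset.sum_add_distrib,
    Finset.sum_sub_distrib, nbr_swap G (fun y => f y ^ 2)]
  have expand2 : ∀ x : V, f x * lap G f x
      = (G.degree x : ℝ) * f x ^ 2 - f x * ∑ y ∈ G.neighborFinset x, f y := by
    intro x; unfold lap; ring
  rw [Finset.sum_congr rfl (fun x _ => expand2 x), Finset.sum_sub_distrib]
  have e1 : ∑ x : V, 2 * f x * ∑ y ∈ G.neighborFinset x, f y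
      = 2 * ∑ x : V, f x * ∑ y ∈ G.neighborFinset x, f y := by
    rw [Finset.mul_sum]; refine Finset.sum_congr rfl (fun x _ => by ring)
  rw [e1]
  ring

end graph

lemma sum_cube_succ {N : ℕ} (F : (Fin (N+1) → Bool) → ℝ) :
    ∑ x, F x = ∑ y : Fin N → Bool, (F (Fin.cons false y) + F (Fin.cons true y)) := by
  have hb : Function.Bijective (fun p : Bool × (Fin N → Bool) => (Fin.cons p.1 p.2 : Fin (N+1) → Bool)) := by
    constructor
    · rintro ⟨a, y⟩ ⟨b, z⟩ h
      simp only at h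
      have h0 := congrArg (fun g : Fin (N+1) → Bool => g 0) h
      simp [Fin.cons_zero] at h0
      have h1 : y = z := by
        funext j
        have := congrArg (fun g : Fin (N+1) → Bool => g j.succ) h
        simpa [Fin.cons_succ] using this
      simp [h0, h1]
    · intro x
      exact ⟨⟨x 0, Fin.tail x⟩, Fin.cons_self_tail x⟩
  rw [← Fintype.sum_bijective _ hb _ _ (fun _ => rfl)]
  rw [Fintype.sum_prod_type_right]
  refine Finset.sum_congr rfl (fun y _ => ?_)
  rw [Fintype.sum_bool]
  ring

lemma cube_poincare (N : ℕ) (h : (Fin N → Bool) → ℝ) :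
    4 * ((2^N : ℝ) * (∑ x, h x ^ 2) - (∑ x, h x)^2)
      ≤ (2^N : ℝ) * ∑ i, ∑ x, (h x - h (Function.update x i (!(x i))))^2 := by
  induction N with
  | zero =>
    simp
  | succ N ih =>
    set h0 : (Fin N → Bool) → ℝ := fun y => h (Fin.cons false y) with hh0
    set h1 : (Fin N → Bool) → ℝ := fun y => h (Fin.cons true y) with hh1
    have hsum : ∑ x, h x = ∑ y, h0 y + ∑ y, h1 y := by
      rw [sum_cube_succ]; rw [Finset.sum_add_distrib]
    have hsq : ∑ x, h x ^ 2 = ∑ y, h0 y ^ 2 + ∑ y, h1 y ^ 2 := by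
      rw [sum_cube_succ (fun x => h x ^ 2)]; rw [Finset.sum_add_distrib]
    have hedge : ∑ i, ∑ x, (h x - h (Function.update x i (!(x i))))^2
        = (∑ j, ∑ y, (h0 y - h0 (Function.update y j (!(y j))))^2)
          + (∑ j, ∑ y, (h1 y - h1 (Function.update y j (!(y j))))^2)
          + 2 * ∑ y, (h1 y - h0 y)^2 := by
      rw [Fin.sum_univ_succ]
      have e0 : ∑ x, (h x - h (Function.update x 0 (!(x 0))))^2 = 2 * ∑ y, (h1 y - h0 y)^2 := by
        rw [sum_cube_succ (fun x => (h x - h (Function.update x 0 (!(x 0))))^2)]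
        rw [Finset.mul_sum]
        refine Finset.sum_congr rfl (fun y _ => ?_)
        simp only [Fin.cons_zero, Fin.update_cons_zero, Bool.not_false, Bool.not_true]
        ring
      have eS : ∀ j : Fin N, ∑ x, (h x - h (Function.update x j.succ (!(x j.succ))))^2
          = (∑ y, (h0 y - h0 (Function.update y j (!(y j))))^2)
            + ∑ y, (h1 y - h1 (Function.update y j (!(y j))))^2 := by
        intro j
        rw [sum_cube_succ (fun x => (h x - h (Function.update x j.succ (!(x j.succ))))^2)]
        rw [← Finset.sum_add_distrib]
        refine Finset.sum_congr rfl (fun y _ => ?_)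
        simp only [Fin.cons_succ, ← Fin.cons_update]
        rfl
      rw [e0]
      rw [Finset.sum_congr rfl (fun j _ => eS j), Finset.sum_add_distrib]
      ring
    have ih0 := ih h0
    have ih1 := ih h1
    have hcs : (∑ y, (h1 y - h0 y))^2 ≤ (2^N : ℝ) * ∑ y, (h1 y - h0 y)^2 := by
      have := sq_sum_le_card_mul_sum_sq (s := (univ : Finset (Fin N → Bool))) (f := fun y => h1 y - h0 y)
      have hc : ((univ : Finset (Fin N → Bool)).card : ℝ) = 2^N := by
        simp [Finset.card_univ]
      calc (∑ y, (h1 y - h0 y))^2 ≤ ((univ : Finset (Fin N → Bool)).card : ℝ) * ∑ y, (h1 y - h0 y)^2 := by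
            exact_mod_cast this
        _ = (2^N : ℝ) * ∑ y, (h1 y - h0 y)^2 := by rw [hc]
    have hSdiff : ∑ y, (h1 y - h0 y) = ∑ y, h1 y - ∑ y, h0 y := by
      rw [Finset.sum_sub_distrib]
    rw [hsum, hsq, hedge]
    rw [hSdiff] at hcs
    have h2 : (2:ℝ)^(N+1) = 2 * 2^N := by ring
    rw [h2]
    nlinarith [ih0, ih1, hcs, pow_pos (show (0:ℝ) < 2 by norm_num) N]

def cubeFlip {N : ℕ} (s : Finset (Fin N)) (i : Fin N) : Finset (Fin N) :=
  if i ∈ s then s.erase i else insert i s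

def toF {N : ℕ} (x : Fin N → Bool) : Finset (Fin N) :=
  univ.filter (fun i => x i = true)

lemma toF_bijective {N : ℕ} : Function.Bijective (toF (N := N)) := by
  constructor
  · intro x y h
    funext i
    have := congrArg (fun s => i ∈ s) h
    simp [toF] at this
    cases hx : x i <;> cases hy : y i <;> simp [hx, hy] at this ⊢
  · intro s
    refine ⟨fun i => decide (i ∈ s), ?_⟩
    ext i
    simp [toF]

lemma toF_update {N : ℕ} (x : Fin N → Bool) (i : Fin N) :
    toF (Function.update x i (!(x i))) = cubeFlip (toF x) i := by
  ext j
  by_cases hj : j = i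
  · subst hj
    cases hx : x j <;> simp [toF, cubeFlip, Function.update, hx]
  · cases hx : x i <;>
      simp [toF, cubeFlip, Function.update, hj, hx, Finset.mem_erase, Finset.mem_insert]


lemma cube_poincare_finset (N : ℕ) (g : Finset (Fin N) → ℝ) :
    4 * ((2^N : ℝ) * (∑ s, g s ^ 2) - (∑ s, g s)^2)
      ≤ (2^N : ℝ) * ∑ i, ∑ s, (g s - g (cubeFlip s i))^2 := by
  have key := cube_poincare N (fun x => g (toF x))
  have e1 : ∑ x : Fin N → Bool, g (toF x) = ∑ s, g s :=
    Fintype.sum_bijective _ toF_bijective _ _ (fun _ => rfl)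
  have e2 : ∑ x : Fin N → Bool, g (toF x) ^ 2 = ∑ s, g s ^ 2 :=
    Fintype.sum_bijective _ toF_bijective _ _ (fun _ => rfl)
  have e3 : ∀ i, ∑ x : Fin N → Bool, (g (toF x) - g (toF (Function.update x i (!(x i)))))^2
      = ∑ s, (g s - g (cubeFlip s i))^2 := by
    intro i
    refine Fintype.sum_bijective _ toF_bijective _ _ (fun x => ?_)
    rw [toF_update]
  calc 4 * ((2^N : ℝ) * (∑ s, g s ^ 2) - (∑ s, g s)^2)
      = 4 * ((2^N : ℝ) * (∑ x : Fin N → Bool, g (toF x) ^ 2) - (∑ x : Fin N → Bool, g (toF x))^2) := by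
        rw [e1, e2]
    _ ≤ (2^N : ℝ) * ∑ i, ∑ x : Fin N → Bool, (g (toF x) - g (toF (Function.update x i (!(x i)))))^2 := key
    _ = (2^N : ℝ) * ∑ i, ∑ s, (g s - g (cubeFlip s i))^2 := by
        rw [Finset.sum_congr rfl (fun i _ => e3 i)]

abbrev Vtx (n : ℕ) := {s : Finset (Fin (n + 2)) // s.Nonempty ∧ s.card ≤ n + 1}

noncomputable def gext (n : ℕ) (f : Vtx n → ℝ) : Finset (Fin (n+2)) → ℝ :=
  fun s => if hs : s.Nonempty ∧ s.card ≤ n + 1 then f ⟨s, hs⟩ else 0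

lemma gext_coe {n : ℕ} (f : Vtx n → ℝ) (v : Vtx n) : gext n f v.1 = f v := by
  simp [gext, v.2]

lemma sum_gext {n : ℕ} (h : Vtx n → ℝ) :
    ∑ s : Finset (Fin (n+2)),
      (if hs : s.Nonempty ∧ s.card ≤ n + 1 then h ⟨s, hs⟩ else 0) = ∑ v, h v := by
  classical
  rw [← Finset.sum_filter_add_sum_filter_not univ (fun s => s.Nonempty ∧ s.card ≤ n+1)]
  have h2 : ∑ s ∈ filter (fun s => ¬(s.Nonempty ∧ s.card ≤ n+1)) univ,
      (if hs : s.Nonempty ∧ s.card ≤ n + 1 then h ⟨s, hs⟩ else 0) = 0 := by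
    refine Finset.sum_eq_zero (fun s hsmem => ?_)
    rw [dif_neg (Finset.mem_filter.mp hsmem).2]
  rw [h2, add_zero]
  rw [Finset.sum_subtype (p := fun s => s.Nonempty ∧ s.card ≤ n+1) _ (fun s => by simp) _]
  refine Finset.sum_congr rfl (fun v _ => ?_)
  rw [dif_pos v.2]

lemma cubeFlip_mem {N : ℕ} {s : Finset (Fin N)} {i : Fin N} (h : i ∈ s) :
    cubeFlip s i = s.erase i := if_pos h

lemma cubeFlip_not_mem {N : ℕ} {s : Finset (Fin N)} {i : Fin N} (h : i ∉ s) :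
    cubeFlip s i = insert i s := if_neg h

lemma vertex_split {n : ℕ} (hn : 2 ≤ n) (f : Vtx n → ℝ) (v : Vtx n) :
    ∑ i, (gext n f v.1 - gext n f (cubeFlip v.1 i))^2
      = (∑ w ∈ (simplexGraph n).neighborFinset v, (f v - f w)^2)
        + (if v.1.card = 1 ∨ v.1.card = n+1 then (f v)^2 else 0) := by
  classical
  obtain ⟨s, hs⟩ := v
  obtain ⟨hsne, hscard⟩ := hs
  have hpos : 0 < s.card := Finset.card_pos.mpr hsne
  set good : Fin (n+2) → Prop :=
    fun i => (cubeFlip s i).Nonempty ∧ (cubeFlip s i).card ≤ n+1 with hgood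
  rw [← Finset.sum_filter_add_sum_filter_not univ good]
  congr 1
  · -- good part equals neighbor sum
    refine Finset.sum_bij
      (fun i hi => (⟨cubeFlip s i, (Finset.mem_filter.mp hi).2⟩ : Vtx n)) ?_ ?_ ?_ ?_
    · -- maps to neighbors
      intro a ha
      rw [SimpleGraph.mem_neighborFinset]
      by_cases hm : a ∈ s
      · have hflip : cubeFlip s a = s.erase a := cubeFlip_mem hm
        right
        constructor
        · show cubeFlip s a ⊆ s
          rw [hflip]; exact Finset.erase_subset _ _
        · show s.card = (cubeFlip s a).card + 1
          rw [hflip, Finset.card_erase_of_mem hm]; omega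
      · have hflip : cubeFlip s a = insert a s := cubeFlip_not_mem hm
        left
        constructor
        · show s ⊆ cubeFlip s a
          rw [hflip]; exact Finset.subset_insert _ _
        · show (cubeFlip s a).card = s.card + 1
          rw [hflip, Finset.card_insert_of_notMem hm]
    · -- injective
      intro a ha b hb hab
      have h : cubeFlip s a = cubeFlip s b := congrArg Subtype.val hab
      by_cases hma : a ∈ s <;> by_cases hmb : b ∈ s
      · rw [cubeFlip_mem hma, cubeFlip_mem hmb] at h
        by_contra hne
        have : a ∈ s.erase b := Finset.mem_erase.mpr ⟨hne, hma⟩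
        rw [← h] at this
        exact (Finset.notMem_erase a s) this
      · rw [cubeFlip_mem hma, cubeFlip_not_mem hmb] at h
        exfalso
        have : b ∈ s.erase a := by rw [h]; exact Finset.mem_insert_self b s
        exact hmb (Finset.mem_of_mem_erase this)
      · rw [cubeFlip_not_mem hma, cubeFlip_mem hmb] at h
        exfalso
        have : a ∈ s.erase b := by rw [← h]; exact Finset.mem_insert_self a s
        exact hma (Finset.mem_of_mem_erase this)
      · rw [cubeFlip_not_mem hma, cubeFlip_not_mem hmb] at h
        have : a ∈ insert b s := by rw [← h]; exact Finset.mem_insert_self a s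
        rcases Finset.mem_insert.mp this with h' | h'
        · exact h'
        · exact absurd h' hma
    · -- surjective
      intro w hw
      rw [SimpleGraph.mem_neighborFinset] at hw
      rcases hw with ⟨hsub, hc⟩ | ⟨hsub, hc⟩
      · have hsub' : s ⊆ w.1 := hsub
        have hc' : w.1.card = s.card + 1 := hc
        have hne : (w.1 \ s).Nonempty := by
          rw [← Finset.card_pos, Finset.card_sdiff_of_subset hsub']
          omega
        obtain ⟨a, ha⟩ := hne
        have haw : a ∈ w.1 := (Finset.mem_sdiff.mp ha).1
        have has : a ∉ s := (Finset.mem_sdiff.mp ha).2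
        have heq : cubeFlip s a = w.1 := by
          rw [cubeFlip_not_mem has]
          refine Finset.eq_of_subset_of_card_le (Finset.insert_subset haw hsub') ?_
          rw [Finset.card_insert_of_notMem has]
          omega
        have hmem : a ∈ filter good univ := by
          rw [Finset.mem_filter]
          refine ⟨Finset.mem_univ a, ?_⟩
          show (cubeFlip s a).Nonempty ∧ (cubeFlip s a).card ≤ n+1
          rw [heq]
          exact w.2
        exact ⟨a, hmem, Subtype.ext heq⟩
      · have hsub' : w.1 ⊆ s := hsub
        have hc' : s.card = w.1.card + 1 := hc
        have hne : (s \ w.1).Nonempty := by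
          rw [← Finset.card_pos, Finset.card_sdiff_of_subset hsub']
          omega
        obtain ⟨a, ha⟩ := hne
        have has : a ∈ s := (Finset.mem_sdiff.mp ha).1
        have haw : a ∉ w.1 := (Finset.mem_sdiff.mp ha).2
        have heq : cubeFlip s a = w.1 := by
          rw [cubeFlip_mem has]
          refine (Finset.eq_of_subset_of_card_le
            (Finset.subset_erase.mpr ⟨hsub', haw⟩) ?_).symm
          rw [Finset.card_erase_of_mem has]
          omega
        have hmem : a ∈ filter good univ := by
          rw [Finset.mem_filter]
          refine ⟨Finset.mem_univ a, ?_⟩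
          show (cubeFlip s a).Nonempty ∧ (cubeFlip s a).card ≤ n+1
          rw [heq]
          exact w.2
        exact ⟨a, hmem, Subtype.ext heq⟩
    · -- values agree
      intro a ha
      rw [gext_coe (v := ⟨s, ⟨hsne, hscard⟩⟩),
        gext_coe (v := (⟨cubeFlip s a, (Finset.mem_filter.mp ha).2⟩ : Vtx n))]
  · -- bad part
    have hval : ∀ i ∈ filter (fun i => ¬ good i) univ,
        (gext n f s - gext n f (cubeFlip s i))^2 = (f ⟨s, ⟨hsne, hscard⟩⟩)^2 := by
      intro i hi
      have hbad : ¬ good i := (Finset.mem_filter.mp hi).2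
      have hbad' : ¬ ((cubeFlip s i).Nonempty ∧ (cubeFlip s i).card ≤ n+1) := hbad
      have hz : gext n f (cubeFlip s i) = 0 := dif_neg hbad'
      rw [hz, gext_coe (v := ⟨s, ⟨hsne, hscard⟩⟩), sub_zero]
    rw [Finset.sum_congr rfl hval, Finset.sum_const, nsmul_eq_mul]
    by_cases h1 : s.card = 1
    · obtain ⟨a, hsa⟩ := Finset.card_eq_one.mp h1
      have hfilter : filter (fun i => ¬ good i) univ = {a} := by
        ext i
        simp only [Finset.mem_filter, Finset.mem_univ, true_and, Finset.mem_singleton]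
        constructor
        · intro hbad
          by_contra hia
          apply hbad
          show (cubeFlip s i).Nonempty ∧ (cubeFlip s i).card ≤ n+1
          have hnis : i ∉ s := by rw [hsa]; simp [hia]
          rw [cubeFlip_not_mem hnis]
          exact ⟨Finset.insert_nonempty _ _,
            by rw [Finset.card_insert_of_notMem hnis, h1]; omega⟩
        · intro hia
          subst hia
          show ¬ ((cubeFlip s i).Nonempty ∧ (cubeFlip s i).card ≤ n+1)
          have his : i ∈ s := by rw [hsa]; exact Finset.mem_singleton_self i
          rw [cubeFlip_mem his, hsa, Finset.erase_singleton]
          simp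
      rw [hfilter, if_pos (Or.inl h1), Finset.card_singleton]
      norm_num
    · by_cases h2 : s.card = n + 1
      · have hcc : sᶜ.card = 1 := by
          rw [Finset.card_compl, h2]
          simp
        obtain ⟨a, hac⟩ := Finset.card_eq_one.mp hcc
        have hmem_iff : ∀ i : Fin (n+2), i ∉ s ↔ i = a := by
          intro i
          rw [← Finset.mem_compl, hac, Finset.mem_singleton]
        have hfilter : filter (fun i => ¬ good i) univ = {a} := by
          ext i
          simp only [Finset.mem_filter, Finset.mem_univ, true_and, Finset.mem_singleton]
          constructor
          · intro hbad
            by_contra hia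
            apply hbad
            show (cubeFlip s i).Nonempty ∧ (cubeFlip s i).card ≤ n+1
            have his : i ∈ s := by
              by_contra h
              exact hia ((hmem_iff i).mp h)
            rw [cubeFlip_mem his]
            constructor
            · rw [← Finset.card_pos, Finset.card_erase_of_mem his]
              omega
            · rw [Finset.card_erase_of_mem his]
              omega
          · intro hia
            subst hia
            show ¬ ((cubeFlip s i).Nonempty ∧ (cubeFlip s i).card ≤ n+1)
            have hins : i ∉ s := (hmem_iff i).mpr rfl
            rw [cubeFlip_not_mem hins]
            rintro ⟨-, hcard⟩
            rw [Finset.card_insert_of_notMem hins, h2] at hcard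
            omega
        rw [hfilter, if_pos (Or.inr h2), Finset.card_singleton]
        norm_num
      · have hfilter : filter (fun i => ¬ good i) univ = ∅ := by
          ext i
          simp only [Finset.mem_filter, Finset.mem_univ, true_and,
            Finset.notMem_empty, iff_false, not_not]
          show (cubeFlip s i).Nonempty ∧ (cubeFlip s i).card ≤ n+1
          by_cases his : i ∈ s
          · rw [cubeFlip_mem his]
            constructor
            · rw [← Finset.card_pos, Finset.card_erase_of_mem his]
              omega
            · rw [Finset.card_erase_of_mem his]
              omega
          · rw [cubeFlip_not_mem his]
            constructor
            · exact Finset.insert_nonempty _ _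
            · rw [Finset.card_insert_of_notMem his]
              omega
        rw [hfilter, if_neg (by push_neg; exact ⟨h1, h2⟩)]
        simp

lemma badset (n : ℕ) :
    (filter (fun s : Finset (Fin (n+2)) => ¬(s.Nonempty ∧ s.card ≤ n+1)) univ)
      = {∅, Finset.univ} := by
  ext s
  simp only [Finset.mem_filter, Finset.mem_univ, true_and, Finset.mem_insert,
    Finset.mem_singleton]
  constructor
  · intro h
    rw [not_and_or] at h
    rcases h with h | h
    · left; exact Finset.not_nonempty_iff_eq_empty.mp h
    · right
      have h1 : s.card ≤ n+2 := by
        have := Finset.card_le_univ s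
        simpa using this
      have h2 : s.card = n + 2 := by omega
      apply Finset.eq_univ_of_card
      simpa using h2
  · rintro (rfl | rfl)
    · simp
    · rintro ⟨-, h⟩
      rw [Finset.card_univ] at h
      simp at h

lemma sum_split (n : ℕ) (A : Finset (Fin (n+2)) → ℝ) :
    ∑ s : Finset (Fin (n+2)), A s
      = (∑ v : Vtx n, A v.1) + (A ∅ + A Finset.univ) := by
  classical
  rw [← Finset.sum_filter_add_sum_filter_not univ (fun s => s.Nonempty ∧ s.card ≤ n+1)]
  rw [badset n]
  rw [Finset.sum_pair (Ne.symm (Finset.nonempty_iff_ne_empty.mp Finset.univ_nonempty))]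
  rw [Finset.sum_subtype (p := fun s => s.Nonempty ∧ s.card ≤ n+1) _ (fun s => by simp) A]

lemma gext_empty {n : ℕ} (f : Vtx n → ℝ) : gext n f ∅ = 0 := by
  refine dif_neg ?_
  simp

lemma gext_univ {n : ℕ} (f : Vtx n → ℝ) : gext n f Finset.univ = 0 := by
  refine dif_neg ?_
  rintro ⟨-, h⟩
  rw [Finset.card_univ] at h
  simp at h

def e1 (n : ℕ) (i : Fin (n+2)) : Vtx n :=
  ⟨{i}, ⟨Finset.singleton_nonempty i, by rw [Finset.card_singleton]; omega⟩⟩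

def e2 (n : ℕ) (i : Fin (n+2)) : Vtx n :=
  ⟨Finset.univ.erase i,
    ⟨by
      rw [← Finset.card_pos, Finset.card_erase_of_mem (Finset.mem_univ i),
        Finset.card_univ, Fintype.card_fin]
      omega,
     by
      rw [Finset.card_erase_of_mem (Finset.mem_univ i), Finset.card_univ, Fintype.card_fin]
      omega⟩⟩

lemma qc_empty (n : ℕ) (f : Vtx n → ℝ) :
    ∑ i, (gext n f ∅ - gext n f (cubeFlip ∅ i))^2 = ∑ i, (f (e1 n i))^2 := by
  refine Finset.sum_congr rfl (fun i _ => ?_)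
  rw [gext_empty, cubeFlip_not_mem (Finset.notMem_empty i)]
  have h : insert i (∅ : Finset (Fin (n+2))) = {i} := rfl
  rw [h]
  have h2 : gext n f {i} = f (e1 n i) := gext_coe f (e1 n i)
  rw [h2]
  ring

lemma qc_univ (n : ℕ) (f : Vtx n → ℝ) :
    ∑ i, (gext n f Finset.univ - gext n f (cubeFlip Finset.univ i))^2
      = ∑ i, (f (e2 n i))^2 := by
  refine Finset.sum_congr rfl (fun i _ => ?_)
  rw [gext_univ, cubeFlip_mem (Finset.mem_univ i)]
  have h2 : gext n f (Finset.univ.erase i) = f (e2 n i) := gext_coe f (e2 n i)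
  rw [h2]
  ring

lemma boundary_le {n : ℕ} (hn : 2 ≤ n) (f : Vtx n → ℝ) :
    (∑ i, (f (e1 n i))^2) + (∑ i, (f (e2 n i))^2) ≤ ∑ v, (f v)^2 := by
  classical
  have h1inj : ∀ x ∈ (univ : Finset (Fin (n+2))), ∀ y ∈ univ, e1 n x = e1 n y → x = y := by
    intro x _ y _ h
    have := congrArg (fun v : Vtx n => v.1) h
    simpa [e1] using this
  have h2inj : ∀ x ∈ (univ : Finset (Fin (n+2))), ∀ y ∈ univ, e2 n x = e2 n y → x = y := by
    intro x _ y _ h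
    have h' : Finset.univ.erase x = Finset.univ.erase y := by
      have := congrArg (fun v : Vtx n => v.1) h
      simpa [e2] using this
    by_contra hxy
    have : x ∈ Finset.univ.erase y := Finset.mem_erase.mpr ⟨hxy, Finset.mem_univ x⟩
    rw [← h'] at this
    exact (Finset.notMem_erase x Finset.univ) this
  have hcard1 : ∀ v ∈ Finset.image (e1 n) univ, (v : Vtx n).1.card = 1 := by
    intro v hv
    obtain ⟨i, -, rfl⟩ := Finset.mem_image.mp hv
    simp [e1]
  have hcard2 : ∀ v ∈ Finset.image (e2 n) univ, (v : Vtx n).1.card = n+1 := by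
    intro v hv
    obtain ⟨i, -, rfl⟩ := Finset.mem_image.mp hv
    simp [e2, Finset.card_erase_of_mem (Finset.mem_univ i)]
  have hdisj : Disjoint (Finset.image (e1 n) univ) (Finset.image (e2 n) univ) := by
    rw [Finset.disjoint_left]
    intro v hv1 hv2
    have := hcard1 v hv1
    have := hcard2 v hv2
    omega
  have hs1 : ∑ i, (f (e1 n i))^2 = ∑ v ∈ Finset.image (e1 n) univ, (f v)^2 := by
    rw [Finset.sum_image h1inj]
  have hs2 : ∑ i, (f (e2 n i))^2 = ∑ v ∈ Finset.image (e2 n) univ, (f v)^2 := by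
    rw [Finset.sum_image h2inj]
  rw [hs1, hs2, ← Finset.sum_union hdisj]
  exact Finset.sum_le_sum_of_subset_of_nonneg (Finset.subset_univ _)
    (fun v _ _ => sq_nonneg _)

theorem stmt17 (n : ℕ) (hn : 2 ≤ n) (lam : ℝ) (hlam : lam ≠ 0)
    (f : {s : Finset (Fin (n + 2)) // s.Nonempty ∧ s.card ≤ n + 1} → ℝ) (hf : f ≠ 0)
    (heig : ∀ x, lap (simplexGraph n) f x = lam * f x) :
    2 / ((n : ℝ) + 2) ^ 2 ≤ lam := by
  classical
  set G := simplexGraph n with hG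
  set T := ∑ v : Vtx n, (f v)^2 with hT
  have hfv : ∃ v, f v ≠ 0 := by
    by_contra h
    push_neg at h
    exact hf (funext fun v => h v)
  obtain ⟨v0, hv0⟩ := hfv
  have hTpos : 0 < T := by
    rw [hT]
    refine Finset.sum_pos' (fun v _ => sq_nonneg _) ?_
    exact ⟨v0, Finset.mem_univ v0, by positivity⟩
  have hsum0 : ∑ v : Vtx n, f v = 0 := by
    have h := sum_lap G f
    rw [Finset.sum_congr rfl (fun x _ => heig x), ← Finset.mul_sum] at h
    exact (mul_eq_zero.mp h).resolve_left hlam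
  have hdir : ∑ x : Vtx n, ∑ y ∈ G.neighborFinset x, (f x - f y)^2 = 2 * (lam * T) := by
    rw [dirichlet G f]
    congr 1
    rw [Finset.sum_congr rfl (fun x _ => by rw [heig x]), hT, Finset.mul_sum]
    exact Finset.sum_congr rfl (fun x _ => by ring)
  have hgcoe : ∑ v : Vtx n, gext n f v.1 = ∑ v : Vtx n, f v :=
    Finset.sum_congr rfl (fun v _ => gext_coe f v)
  have hg0 : ∑ s : Finset (Fin (n+2)), gext n f s = 0 := by
    rw [sum_split n (gext n f), gext_empty, gext_univ, hgcoe, hsum0]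
    ring
  have hgsq : ∑ s : Finset (Fin (n+2)), (gext n f s)^2 = T := by
    rw [sum_split n (fun s => (gext n f s)^2)]
    have h1 : ∑ v : Vtx n, (gext n f v.1)^2 = T := by
      rw [hT]
      exact Finset.sum_congr rfl (fun v _ => by rw [gext_coe f v])
    rw [h1, gext_empty, gext_univ]
    norm_num
  have hpoin := cube_poincare_finset (n+2) (gext n f)
  rw [hg0, hgsq] at hpoin
  set QC := ∑ i, ∑ s : Finset (Fin (n+2)), (gext n f s - gext n f (cubeFlip s i))^2 with hQC
  have hQCge : 4 * T ≤ QC := by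
    have hp : (0:ℝ) < 2^(n+2) := by positivity
    have h' : (2:ℝ)^(n+2) * (4 * T) ≤ 2^(n+2) * QC := by
      calc (2:ℝ)^(n+2) * (4 * T) = 4 * ((2:ℝ)^(n+2) * T - 0^2) := by ring
        _ ≤ 2^(n+2) * QC := hpoin
    exact le_of_mul_le_mul_left h' hp
  have hsplitQC : QC = (∑ v : Vtx n, ∑ i, (gext n f v.1 - gext n f (cubeFlip v.1 i))^2)
      + ((∑ i, (f (e1 n i))^2) + (∑ i, (f (e2 n i))^2)) := by
    rw [hQC, Finset.sum_comm,
      sum_split n (fun s => ∑ i, (gext n f s - gext n f (cubeFlip s i))^2)]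
    rw [qc_empty n f, qc_univ n f]
  have hvs : ∑ v : Vtx n, ∑ i, (gext n f v.1 - gext n f (cubeFlip v.1 i))^2
      = (∑ v : Vtx n, ∑ w ∈ G.neighborFinset v, (f v - f w)^2)
        + ∑ v : Vtx n, (if v.1.card = 1 ∨ v.1.card = n+1 then (f v)^2 else 0) := by
    rw [Finset.sum_congr rfl (fun v _ => vertex_split hn f v), Finset.sum_add_distrib]
  have hite_le : ∑ v : Vtx n, (if v.1.card = 1 ∨ v.1.card = n+1 then (f v)^2 else 0) ≤ T := by
    rw [hT]
    refine Finset.sum_le_sum (fun v _ => ?_)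
    split
    · exact le_refl _
    · exact sq_nonneg _
  have hbd : (∑ i, (f (e1 n i))^2) + (∑ i, (f (e2 n i))^2) ≤ T := by
    rw [hT]; exact boundary_le hn f
  have hlam1 : 1 ≤ lam := by
    have hQeq : 2 * (lam * T)
        = QC - (∑ v : Vtx n, (if v.1.card = 1 ∨ v.1.card = n+1 then (f v)^2 else 0))
          - ((∑ i, (f (e1 n i))^2) + (∑ i, (f (e2 n i))^2)) := by
      rw [hsplitQC, hvs, ← hdir]
      ring
    nlinarith [hTpos, hQCge, hite_le, hbd, hQeq]
  have hpos2 : (0:ℝ) < ((n:ℝ)+2)^2 := by positivity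
  have hle1 : 2 / ((n:ℝ)+2)^2 ≤ 1 := by
    rw [div_le_one hpos2]
    nlinarith [Nat.cast_nonneg (α := ℝ) n]
  linarith
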